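/- Corollary 5.2 (upper bound): For homogeneous divisible items, the incentive ratio of the Maximum Nash Welfare mechanism is at most 2. Precisely: let (v_1,…,v_n) be a profile of item values and v_1' a misreport by agent 1. If x is a complete allocation maximizing ∏_{i=1}^n u_i(x) with respect to the true profile, and x' is a complete allocation maximizing (Σ_t v'_{1,t} x'_{1,t}) · ∏_{i=2}^n u_i(x') (i.e., x' is MNW for the profile (v_1', v_2,…,v_n)), then Σ_t v_{1,t} x'_{1,t} ≤ 2 · Σ_t v_{1,t} x_{1,t}. -/

import Mathlib

/-- An allocation of `m` homogeneous divisible items among `n` agents: a matrix of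
fractions in `[0,1]` whose column sums are at most `1`. -/
def ItemAlloc {n m : ℕ} (x : Fin n → Fin m → ℝ) : Prop :=
  (∀ i t, x i t ∈ Set.Icc (0 : ℝ) 1) ∧ ∀ t, (∑ i, x i t) ≤ 1

/-- A complete allocation: every item is fully allocated. -/
def ItemAllocComplete {n m : ℕ} (x : Fin n → Fin m → ℝ) : Prop :=
  ItemAlloc x ∧ ∀ t, (∑ i, x i t) = 1

/-- Agent `i`'s utility under the values `v` and the allocation `x`. -/
def itemUtil {n m : ℕ} (v : Fin n → Fin m → ℝ) (x : Fin n → Fin m → ℝ) (i : Fin n) : ℝ :=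
  ∑ t, v i t * x i t

/-- A valid profile of item values: nonnegative with positive total for each agent. -/
def ValidItemProfile {n m : ℕ} (v : Fin n → Fin m → ℝ) : Prop :=
  ∀ i, (∀ t, 0 ≤ v i t) ∧ 0 < ∑ t, v i t

/-- An MNW allocation for homogeneous divisible items. -/
def IsItemMNW {n m : ℕ} (v : Fin n → Fin m → ℝ) (x : Fin n → Fin m → ℝ) : Prop :=
  ItemAlloc x ∧ ∀ z : Fin n → Fin m → ℝ, ItemAlloc z →
    (∏ i, itemUtil v z i) ≤ ∏ i, itemUtil v x i

/-- A complete MNW allocation for homogeneous divisible items (no free disposal). -/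
def IsItemCompleteMNW {n m : ℕ} (v : Fin n → Fin m → ℝ) (x : Fin n → Fin m → ℝ) : Prop :=
  ItemAllocComplete x ∧ ∀ z : Fin n → Fin m → ℝ, ItemAllocComplete z →
    (∏ i, itemUtil v z i) ≤ ∏ i, itemUtil v x i

lemma aux_util_nonneg {N m : ℕ} (v x : Fin N → Fin m → ℝ) (i : Fin N)
    (hv : ∀ t, 0 ≤ v i t) (hx : ItemAlloc x) : 0 ≤ itemUtil v x i :=
  Finset.sum_nonneg fun t _ => mul_nonneg (hv t) (hx.1 i t).1

lemma aux_mnw_pos {N m : ℕ} (v x : Fin (N + 1) → Fin m → ℝ)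
    (hv : ValidItemProfile v) (hx : IsItemCompleteMNW v x) :
    ∀ i, 0 < itemUtil v x i := by
  set e : Fin (N + 1) → Fin m → ℝ := fun _ _ => ((N : ℝ) + 1)⁻¹ with he
  have hN : (0:ℝ) < (N : ℝ) + 1 := by positivity
  have hsum1 : ∀ t : Fin m, (∑ i : Fin (N + 1), e i t) = 1 := by
    intro t
    rw [he]
    rw [Finset.sum_const, Finset.card_univ, Fintype.card_fin, nsmul_eq_mul]
    push_cast
    rw [mul_inv_cancel₀ (by positivity)]
  have hec : ItemAllocComplete e := by
    refine ⟨⟨fun i t => ⟨by positivity, ?_⟩, fun t => le_of_eq (hsum1 t)⟩, hsum1⟩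
    rw [he, inv_eq_one_div]
    exact div_le_one_of_le₀ (by linarith) (by linarith)
  have hepos : ∀ i, 0 < itemUtil v e i := by
    intro i
    have : itemUtil v e i = (∑ t, v i t) * ((N : ℝ) + 1)⁻¹ := by
      simp [itemUtil, he, Finset.sum_mul]
    rw [this]
    exact mul_pos (hv i).2 (by positivity)
  have hprod : 0 < ∏ i, itemUtil v x i :=
    lt_of_lt_of_le (Finset.prod_pos fun i _ => hepos i) (hx.2 e hec)
  intro i
  rcases eq_or_lt_of_le (aux_util_nonneg v x i (hv i).1 hx.1.1) with h | h
  · exfalso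
    have h0 : itemUtil v x i = 0 := h.symm
    rw [← Finset.prod_eq_zero (Finset.mem_univ i) h0] at hprod
    exact lt_irrefl _ hprod
  · exact h

lemma aux_first_order {N m : ℕ} (v x : Fin N → Fin m → ℝ)
    (hx : IsItemCompleteMNW v x) (hpos : ∀ i, 0 < itemUtil v x i)
    (z : Fin N → Fin m → ℝ) (hz : ItemAllocComplete z) :
    ∑ i, itemUtil v z i / itemUtil v x i ≤ (N : ℝ) := by
  set a : Fin N → ℝ := fun i => itemUtil v x i with ha
  set b : Fin N → ℝ := fun i => itemUtil v z i with hb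
  set d : Fin N → ℝ := fun i => b i - a i with hd
  set f : ℝ → ℝ := fun ε => ∏ i, (a i + ε * d i) with hf
  have hmax : ∀ ε ∈ Set.Icc (0:ℝ) 1, f ε ≤ f 0 := by
    intro ε hε
    set w : Fin N → Fin m → ℝ := fun i t => x i t + ε * (z i t - x i t) with hw
    have hwsum : ∀ t : Fin m, ∑ i, w i t = 1 := by
      intro t
      have h1 : ∑ i, w i t = (∑ i, x i t) + ε * ((∑ i, z i t) - ∑ i, x i t) := by
        simp [hw, Finset.sum_add_distrib, mul_sub, Finset.sum_sub_distrib, Finset.mul_sum]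
      rw [h1, hx.1.2 t, hz.2 t]; ring
    have hwc : ItemAllocComplete w := by
      refine ⟨⟨fun i t => ?_, fun t => le_of_eq (hwsum t)⟩, hwsum⟩
      obtain ⟨hx0, hx1⟩ := hx.1.1.1 i t
      obtain ⟨hz0, hz1⟩ := hz.1.1 i t
      refine ⟨?_, ?_⟩ <;> simp only [hw] <;> nlinarith [hε.1, hε.2]
    have hwu : ∀ i, itemUtil v w i = a i + ε * d i := by
      intro i
      have hterm : ∀ t : Fin m, v i t * (x i t + ε * (z i t - x i t)) =
          v i t * x i t + ε * (v i t * z i t - v i t * x i t) := fun t => by ring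
      simp only [itemUtil, hw]
      simp_rw [hterm, Finset.sum_add_distrib, ← Finset.mul_sum, Finset.sum_sub_distrib]
      simp [ha, hb, hd, itemUtil]
    calc f ε = ∏ i, itemUtil v w i := by simp [hf, hwu]
      _ ≤ ∏ i, itemUtil v x i := hx.2 w hwc
      _ = f 0 := by simp [hf, ha]
  have hder : HasDerivAt f (∑ i, (∏ j ∈ Finset.univ.erase i, a j) * d i) 0 := by
    have h1 : ∀ i ∈ Finset.univ, HasDerivAt (fun ε : ℝ => a i + ε * d i) (d i) 0 := by
      intro i _
      simpa using (((hasDerivAt_id (0:ℝ)).mul_const (d i)).const_add (a i))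
    have := HasDerivAt.fun_finsetProd (u := Finset.univ) h1
    simpa [hf, smul_eq_mul] using this
  have hD : (∑ i, (∏ j ∈ Finset.univ.erase i, a j) * d i) ≤ 0 := by
    have ht : Filter.Tendsto (slope f 0) (nhdsWithin 0 (Set.Ioi 0)) (nhds _) :=
      (hasDerivAt_iff_tendsto_slope.1 hder).mono_left
        (nhdsWithin_mono _ (fun y hy => ne_of_gt hy))
    refine le_of_tendsto ht ?_
    filter_upwards [Ioc_mem_nhdsGT_of_mem (Set.left_mem_Ico.2 zero_lt_one)] with ε hε
    rw [slope_def_field]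
    have h1 : f ε ≤ f 0 := hmax ε ⟨le_of_lt hε.1, hε.2⟩
    apply div_nonpos_of_nonpos_of_nonneg <;> simp <;> linarith [hε.1]
  have hP : (0:ℝ) < ∏ i, a i := Finset.prod_pos fun i _ => hpos i
  have hkey : ∀ i : Fin N, (∏ j ∈ Finset.univ.erase i, a j) = (∏ j, a j) / a i := by
    intro i
    rw [eq_div_iff (ne_of_gt (hpos i))]
    exact Finset.prod_erase_mul _ _ (Finset.mem_univ i)
  have hsum : ∑ i, d i / a i ≤ 0 := by
    have heq : ∑ i, (∏ j ∈ Finset.univ.erase i, a j) * d i = (∏ j, a j) * ∑ i, d i / a i := by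
      rw [Finset.mul_sum]
      refine Finset.sum_congr rfl fun i _ => ?_
      rw [hkey i]
      field_simp
    rw [heq] at hD
    exact le_of_mul_le_mul_left (by simpa using hD) hP
  have h1 : ∀ i : Fin N, b i / a i = d i / a i + 1 := by
    intro i
    have hai := (hpos i).ne'
    rw [div_add_one (show a i ≠ 0 from hai)]; congr 1; simp [hd]
  have h2 : ∑ i, b i / a i = (∑ i, d i / a i) + N := by
    calc ∑ i, b i / a i = ∑ i, (d i / a i + 1) := Finset.sum_congr rfl fun i _ => h1 i
      _ = (∑ i, d i / a i) + N := by rw [Finset.sum_add_distrib]; simp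
  have : ∑ i, itemUtil v z i / itemUtil v x i = ∑ i, b i / a i := rfl
  rw [this, h2]
  linarith

/-- Corollary 5.2 (upper bound): for homogeneous divisible items, the incentive
ratio of the MNW mechanism is at most `2`: if `x` is a complete MNW allocation for
the true profile `v` and `x'` is a complete MNW allocation for the profile in which
agent 1 (index `0`) misreports `v1'`, then agent 1's true utility under `x'` is at
most twice his true utility under `x`. -/
theorem mnw_items_incentive_ratio_upper (n m : ℕ) (v : Fin (n + 1) → Fin m → ℝ)
    (v1' : Fin m → ℝ) (hv : ValidItemProfile v)
    (hv1' : (∀ t, 0 ≤ v1' t) ∧ 0 < ∑ t, v1' t)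
    (x x' : Fin (n + 1) → Fin m → ℝ)
    (hx : IsItemCompleteMNW v x)
    (hx' : IsItemCompleteMNW (Function.update v 0 v1') x') :
    itemUtil v x' 0 ≤ 2 * itemUtil v x 0 := by
  set v' : Fin (n + 1) → Fin m → ℝ := Function.update v 0 v1' with hv'def
  have hv'valid : ValidItemProfile v' := by
    intro i
    by_cases h : i = 0
    · subst h; simpa [hv'def] using hv1'
    · simpa [hv'def, Function.update_of_ne h] using hv i
  have ha : ∀ i, 0 < itemUtil v x i := aux_mnw_pos v x hv hx
  have hc : ∀ i, 0 < itemUtil v' x' i := aux_mnw_pos v' x' hv'valid hx'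
  have hA := aux_first_order v x hx ha x' hx'.1
  have hB := aux_first_order v' x' hx' hc x hx.1
  push_cast at hA hB
  have hbc : ∀ i : Fin (n+1), i ≠ 0 → itemUtil v' x' i = itemUtil v x' i := by
    intro i hi; simp [itemUtil, hv'def, Function.update_of_ne hi]
  have hac : ∀ i : Fin (n+1), i ≠ 0 → itemUtil v' x i = itemUtil v x i := by
    intro i hi; simp [itemUtil, hv'def, Function.update_of_ne hi]
  set S := ∑ i ∈ Finset.univ.erase (0 : Fin (n+1)), itemUtil v x' i / itemUtil v x i with hS
  set T := ∑ i ∈ Finset.univ.erase (0 : Fin (n+1)), itemUtil v x i / itemUtil v x' i with hT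
  have hA' : itemUtil v x' 0 / itemUtil v x 0 + S ≤ (n : ℝ) + 1 := by
    rw [← Finset.add_sum_erase _ (fun i => itemUtil v x' i / itemUtil v x i)
      (Finset.mem_univ 0)] at hA
    exact hA
  have hB' : T ≤ (n : ℝ) + 1 := by
    rw [← Finset.add_sum_erase _ (fun i => itemUtil v' x i / itemUtil v' x' i)
      (Finset.mem_univ 0)] at hB
    have h0 : 0 ≤ itemUtil v' x 0 / itemUtil v' x' 0 :=
      div_nonneg (aux_util_nonneg v' x 0 (hv'valid 0).1 hx.1.1) (hc 0).le
    have hrw : ∑ i ∈ Finset.univ.erase (0 : Fin (n+1)), itemUtil v' x i / itemUtil v' x' i = T := by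
      rw [hT]
      refine Finset.sum_congr rfl fun i hi => ?_
      have hi0 := Finset.ne_of_mem_erase hi
      rw [hbc i hi0, hac i hi0]
    rw [hrw] at hB
    linarith
  have hb_pos : ∀ i : Fin (n+1), i ≠ 0 → 0 < itemUtil v x' i := fun i hi => (hbc i hi) ▸ hc i
  have hcard : ∑ i ∈ Finset.univ.erase (0 : Fin (n+1)), (1 : ℝ) = (n : ℝ) := by
    rw [Finset.sum_const, Finset.card_erase_of_mem (Finset.mem_univ 0), Finset.card_univ,
      Fintype.card_fin]
    simp
  have hC : (n : ℝ) ^ 2 ≤ S * T := by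
    have := Finset.sum_sq_le_sum_mul_sum_of_sq_eq_mul (Finset.univ.erase (0 : Fin (n+1)))
      (r := fun _ => (1:ℝ)) (f := fun i => itemUtil v x' i / itemUtil v x i)
      (g := fun i => itemUtil v x i / itemUtil v x' i)
      (fun i hi => div_nonneg (hb_pos i (Finset.ne_of_mem_erase hi)).le (ha i).le)
      (fun i hi => div_nonneg (ha i).le (hb_pos i (Finset.ne_of_mem_erase hi)).le)
      (fun i hi => ?_)
    · rw [hcard] at this
      exact this
    · have h1 := (ha i).ne'
      have h2 := (hb_pos i (Finset.ne_of_mem_erase hi)).ne'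
      field_simp
  have hS0 : 0 ≤ S :=
    Finset.sum_nonneg fun i hi =>
      div_nonneg (hb_pos i (Finset.ne_of_mem_erase hi)).le (ha i).le
  have h5 : S * T ≤ S * ((n : ℝ) + 1) := mul_le_mul_of_nonneg_left hB' hS0
  have h6 : (n : ℝ) - 1 ≤ S := by nlinarith
  have h7 : itemUtil v x' 0 / itemUtil v x 0 ≤ 2 := by linarith
  rw [div_le_iff₀ (ha 0)] at h7
  linarith
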